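/- The anti-norm of the anti-norm is the original norm: in a two-dimensional normed space, applying the anti-norm construction twice (with the same symplectic form ω, up to the natural sign/orientation convention) recovers the original norm; equivalently, ||x|| = sup{ω(y,x) : ||y||_a ≤ 1} for all x. -/

import Mathlib

noncomputable def antinorm {X : Type*} [NormedAddCommGroup X] [NormedSpace ℝ X]
    (ω : X →ₗ[ℝ] X →ₗ[ℝ] ℝ) (y : X) : ℝ :=
  sSup ((fun x => ω x y) '' {x : X | ‖x‖ ≤ 1})


lemma sSup_image_ball_eq_norm {E : Type*} [NormedAddCommGroup E] [NormedSpace ℝ E]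
    (f : E →L[ℝ] ℝ) :
    sSup ((fun x => f x) '' {x : E | ‖x‖ ≤ 1}) = ‖f‖ := by
  set S := (fun x => f x) '' {x : E | ‖x‖ ≤ 1} with hS
  have h0S : (0 : ℝ) ∈ S := ⟨0, by simp, by simp⟩
  have hub : ∀ s ∈ S, s ≤ ‖f‖ := by
    rintro _ ⟨x, (hx : ‖x‖ ≤ 1), rfl⟩
    calc f x ≤ ‖f x‖ := le_abs_self _
    _ ≤ ‖f‖ * ‖x‖ := f.le_opNorm x
    _ ≤ ‖f‖ * 1 := mul_le_mul_of_nonneg_left hx (norm_nonneg f)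
    _ = ‖f‖ := mul_one _
  have hbdd : BddAbove S := ⟨‖f‖, hub⟩
  have h0 : (0:ℝ) ≤ sSup S := le_csSup hbdd h0S
  refine le_antisymm (csSup_le ⟨0, h0S⟩ hub) ?_
  refine f.opNorm_le_bound h0 ?_
  intro x
  rcases eq_or_ne x 0 with rfl | hx
  · simp [h0]
  · set u := ‖x‖⁻¹ • x with hu
    have hnx : (0:ℝ) < ‖x‖ := norm_pos_iff.mpr hx
    have hun : ‖u‖ = 1 := by
      rw [hu, norm_smul, norm_inv, norm_norm, inv_mul_cancel₀ hnx.ne']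
    have h1 : f u ≤ sSup S := le_csSup hbdd ⟨u, by simp [hun], rfl⟩
    have h2 : f (-u) ≤ sSup S := le_csSup hbdd ⟨-u, by simp [hun], rfl⟩
    have habs : ‖f u‖ ≤ sSup S := by
      rw [Real.norm_eq_abs, abs_le]
      refine ⟨?_, h1⟩
      rw [map_neg] at h2; linarith
    have hfx : f x = ‖x‖ * f u := by
      rw [hu, map_smul, smul_eq_mul, ← mul_assoc, mul_inv_cancel₀ hnx.ne', one_mul]
    rw [hfx, Real.norm_eq_abs, abs_mul, abs_of_pos hnx, mul_comm (sSup S) ‖x‖]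
    exact mul_le_mul_of_nonneg_left habs hnx.le

lemma sSup_dual_ball_eq_norm {E : Type*} [NormedAddCommGroup E] [NormedSpace ℝ E]
    (x : E) :
    sSup ((fun f : E →L[ℝ] ℝ => f x) '' {f | ‖f‖ ≤ 1}) = ‖x‖ := by
  set S := (fun f : E →L[ℝ] ℝ => f x) '' {f | ‖f‖ ≤ 1} with hS
  have h0S : (0:ℝ) ∈ S := ⟨0, by simp, by simp⟩
  have hub : ∀ s ∈ S, s ≤ ‖x‖ := by
    rintro _ ⟨f, (hf : ‖f‖ ≤ 1), rfl⟩
    calc f x ≤ ‖f x‖ := le_abs_self _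
    _ ≤ ‖f‖ * ‖x‖ := f.le_opNorm x
    _ ≤ 1 * ‖x‖ := mul_le_mul_of_nonneg_right hf (norm_nonneg x)
    _ = ‖x‖ := one_mul _
  have hbdd : BddAbove S := ⟨‖x‖, hub⟩
  refine le_antisymm (csSup_le ⟨0, h0S⟩ hub) ?_
  rcases eq_or_ne x 0 with rfl | hx
  · simpa using le_csSup hbdd h0S
  · obtain ⟨g, hg1, hgx⟩ := exists_dual_vector ℝ x (norm_ne_zero_iff.mpr hx)
    have : ‖x‖ = g x := by simpa using hgx.symm
    rw [this]
    exact le_csSup hbdd ⟨g, le_of_eq hg1, rfl⟩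


/-- The anti-norm of the anti-norm is the original norm. -/
theorem antinorm_antinorm {X : Type*} [NormedAddCommGroup X] [NormedSpace ℝ X]
    (hdim : Module.finrank ℝ X = 2)
    (ω : X →ₗ[ℝ] X →ₗ[ℝ] ℝ)
    (halt : ∀ x : X, ω x x = 0)
    (hnd : ∀ x : X, (∀ y : X, ω x y = 0) → x = 0) :
    ∀ x : X, ‖x‖ = sSup ((fun y => ω y x) '' {y : X | antinorm ω y ≤ 1}) := by
  haveI : FiniteDimensional ℝ X := FiniteDimensional.of_finrank_eq_succ hdim
  have skew : ∀ a b : X, ω a b = - ω b a := by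
    intro a b
    have h := halt (a + b)
    simp only [map_add, LinearMap.add_apply, halt a, halt b] at h
    linarith
  set Φ : X →ₗ[ℝ] (X →L[ℝ] ℝ) :=
    (LinearMap.toContinuousLinearMap : (X →ₗ[ℝ] ℝ) ≃ₗ[ℝ] (X →L[ℝ] ℝ)).toLinearMap.comp ω with hΦ
  have hΦapp : ∀ y z : X, Φ y z = ω y z := fun y z => rfl
  have hinj : Function.Injective Φ := by
    intro a b hab
    have h : ∀ z : X, ω (a - b) z = 0 := by
      intro z
      have := congrArg (fun f => f z) hab
      simp only [hΦapp] at this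
      simp [map_sub, LinearMap.sub_apply, this]
    exact sub_eq_zero.mp (hnd _ h)
  -- surjectivity
  have hdual : Module.finrank ℝ (X →L[ℝ] ℝ) = Module.finrank ℝ X := by
    rw [(LinearMap.toContinuousLinearMap :
      (X →ₗ[ℝ] ℝ) ≃ₗ[ℝ] (X →L[ℝ] ℝ)).finrank_eq.symm]
    exact Subspace.dual_finrank_eq
  have hsurj : Function.Surjective Φ := by
    rw [← LinearMap.range_eq_top]
    apply Submodule.eq_top_of_finrank_eq
    rw [LinearMap.finrank_range_of_inj hinj, hdual]
  -- antinorm = norm of Φ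
  have hanti : ∀ y : X, antinorm ω y = ‖Φ y‖ := by
    intro y
    rw [← sSup_image_ball_eq_norm (Φ y)]
    unfold antinorm
    congr 1
    ext r
    constructor
    · rintro ⟨z, hz, rfl⟩
      refine ⟨-z, by simpa using hz, ?_⟩
      simp only [map_neg, hΦapp]
      exact (skew z y).symm
    · rintro ⟨z, hz, rfl⟩
      refine ⟨-z, by simpa using hz, ?_⟩
      simp only [map_neg, LinearMap.neg_apply, hΦapp]
      exact (skew y z).symm
  intro x
  rw [← sSup_dual_ball_eq_norm x]
  congr 1
  ext r
  constructor
  · rintro ⟨f, (hf : ‖f‖ ≤ 1), rfl⟩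
    obtain ⟨y, rfl⟩ := hsurj f
    exact ⟨y, by simpa [Set.mem_setOf_eq, hanti y] using hf, (hΦapp y x).symm⟩
  · rintro ⟨y, hy, rfl⟩
    rw [Set.mem_setOf_eq, hanti y] at hy
    exact ⟨Φ y, hy, hΦapp y x⟩
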